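/- Under the hypotheses of the nonconvex Frank–Wolfe theorem with a δ-oracle (S compact convex of diameter D, f with L-Lipschitz gradient, C ≥ max{L D², G D}, iterates x^{k+1} = x^k + (max{g̃_k − δ, 0}/C)(s^k − x^k)), for any ε > 2δ, if K + 1 ≥ 2C (f(x^0) − f*)/(ε − 2δ)², then min_{0 ≤ k ≤ K} G(x^k) ≤ ε, where G(x) = max_{s ∈ S} ⟨∇f(x), x − s⟩ and f* = inf_{x∈S} f(x). -/

import Mathlib

open RealInnerProductSpace

lemma fw_aux_deriv {d : ℕ} (f : EuclideanSpace ℝ (Fin d) → ℝ) (x v : EuclideanSpace ℝ (Fin d))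
    (t : ℝ) (h : DifferentiableAt ℝ f (x + t • v)) :
    HasDerivAt (fun t : ℝ => f (x + t • v)) ⟪gradient f (x + t • v), v⟫ t := by
  have h1 : HasDerivAt (fun t : ℝ => x + t • v) v t := by
    simpa using ((hasDerivAt_id t).smul_const v).const_add x
  have h2 := h.hasGradientAt.hasFDerivAt
  have := h2.comp_hasDerivAt t h1
  rw [InnerProductSpace.toDual_apply_apply] at this
  exact this

lemma fw_quad_bound {d : ℕ} {S : Set (EuclideanSpace ℝ (Fin d))} (hSconv : Convex ℝ S)
    (f : EuclideanSpace ℝ (Fin d) → ℝ) (L : ℝ)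
    (hdiff : ∀ x ∈ S, DifferentiableAt ℝ f x)
    (hLip : ∀ x ∈ S, ∀ y ∈ S, ‖gradient f x - gradient f y‖ ≤ L * ‖x - y‖)
    {x y : EuclideanSpace ℝ (Fin d)} (hx : x ∈ S) (hy : y ∈ S) :
    f y ≤ f x + ⟪gradient f x, y - x⟫ + L / 2 * ‖y - x‖ ^ 2 := by
  set v := y - x with hv
  have hmem : ∀ t ∈ Set.Icc (0:ℝ) 1, x + t • v ∈ S := by
    intro t ht
    have := hSconv hx hy (by linarith [ht.1, ht.2] : 0 ≤ 1 - t) ht.1 (by ring)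
    convert this using 1
    simp [hv, smul_sub]
    module
  set ψ : ℝ → ℝ := fun t => f (x + t • v) - t * ⟪gradient f x, v⟫ - L / 2 * ‖v‖ ^ 2 * t ^ 2
    with hψ
  have hder : ∀ t ∈ Set.Icc (0:ℝ) 1, HasDerivAt ψ
      (⟪gradient f (x + t • v), v⟫ - ⟪gradient f x, v⟫ - L * ‖v‖ ^ 2 * t) t := by
    intro t ht
    have h1 := fw_aux_deriv f x v t (hdiff _ (hmem t ht))
    have h2 : HasDerivAt (fun t : ℝ => t * ⟪gradient f x, v⟫ + L / 2 * ‖v‖ ^ 2 * t ^ 2)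
        (⟪gradient f x, v⟫ + L * ‖v‖ ^ 2 * t) t := by
      have := ((hasDerivAt_id t).mul_const (⟪gradient f x, v⟫ : ℝ)).add
        (((hasDerivAt_pow 2 t)).const_mul (L / 2 * ‖v‖ ^ 2))
      convert this using 1
      · rfl
      · rfl
      · rfl
      ring
    have := h1.sub h2
    convert this using 1
    · rfl
    · rfl
    · ext u; simp [hψ]; ring
    · ring
  have hanti : AntitoneOn ψ (Set.Icc (0:ℝ) 1) := by
    apply antitoneOn_of_deriv_nonpos (convex_Icc 0 1)
    · exact fun t ht => ((hder t ht).differentiableAt.continuousAt).continuousWithinAt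
    · intro t ht
      rw [interior_Icc] at ht
      exact (hder t (Set.mem_Icc_of_Ioo ht)).differentiableAt.differentiableWithinAt
    · intro t ht
      rw [interior_Icc] at ht
      rw [(hder t (Set.mem_Icc_of_Ioo ht)).deriv]
      have hb : ⟪gradient f (x + t • v) - gradient f x, v⟫ ≤ L * ‖v‖ ^ 2 * t := by
        calc ⟪gradient f (x + t • v) - gradient f x, v⟫
            ≤ ‖gradient f (x + t • v) - gradient f x‖ * ‖v‖ := real_inner_le_norm _ _
          _ ≤ (L * ‖x + t • v - x‖) * ‖v‖ := by
              have := hLip _ (hmem t (Set.mem_Icc_of_Ioo ht)) _ hx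
              exact mul_le_mul_of_nonneg_right this (norm_nonneg _)
          _ = L * ‖v‖ ^ 2 * t := by
              have : ‖x + t • v - x‖ = t * ‖v‖ := by
                simp [norm_smul, abs_of_pos ht.1]
              rw [this]; ring
      have := inner_sub_left (𝕜 := ℝ) (gradient f (x + t • v)) (gradient f x) v
      rw [this] at hb
      linarith
  have := hanti (Set.mem_Icc.2 ⟨le_refl 0, zero_le_one⟩)
    (Set.mem_Icc.2 ⟨zero_le_one, le_refl 1⟩) zero_le_one
  simp only [hψ] at this
  simp only [zero_smul, add_zero, one_smul, mul_zero, zero_mul] at this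
  have hxy : x + v = y := by simp [hv]
  rw [hxy] at this
  nlinarith [this]

set_option maxHeartbeats 1600000 in
/-- Iteration-complexity corollary of the nonconvex Frank–Wolfe theorem with a
δ-oracle: if `ε > 2δ` and `K + 1 ≥ 2C (f(x⁰) - f*)/(ε - 2δ)²`, then some
iterate among `x⁰, …, x^K` has Frank–Wolfe gap at most `ε`. -/
theorem nonconvex_fw_delta_oracle_complexity {d : ℕ}
    (S : Set (EuclideanSpace ℝ (Fin d)))
    (hSne : S.Nonempty) (hScomp : IsCompact S) (hSconv : Convex ℝ S)
    (f : EuclideanSpace ℝ (Fin d) → ℝ) (L C δ : ℝ) (hδ : 0 ≤ δ)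
    (hdiff : ∀ x ∈ S, DifferentiableAt ℝ f x)
    (hLip : ∀ x ∈ S, ∀ y ∈ S, ‖gradient f x - gradient f y‖ ≤ L * ‖x - y‖)
    (hC : C ≥ max (L * (Metric.diam S) ^ 2)
      (sSup ((fun x => ‖gradient f x‖) '' S) * Metric.diam S))
    (x s g : ℕ → EuclideanSpace ℝ (Fin d))
    (hx0 : x 0 ∈ S)
    (horacle : ∀ k, ∀ t ∈ S, |⟪gradient f (x k) - g k, t - x k⟫| ≤ δ)
    (hsS : ∀ k, s k ∈ S)
    (hmin : ∀ k, ∀ t ∈ S, ⟪g k, s k - x k⟫ ≤ ⟪g k, t - x k⟫)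
    (hupd : ∀ k, x (k + 1) =
      x k + (max (⟪g k, x k - s k⟫ - δ) 0 / C) • (s k - x k))
    (ε : ℝ) (hε : ε > 2 * δ) (K : ℕ)
    (hK : (K + 1 : ℝ) ≥ 2 * C * (f (x 0) - sInf (f '' S)) / (ε - 2 * δ) ^ 2) :
    ∃ k ≤ K, sSup ((fun t => ⟪gradient f (x k), x k - t⟫) '' S) ≤ ε := by
  set D := Metric.diam S with hD
  set Gn := sSup ((fun x => ‖gradient f x‖) '' S) with hGn
  have hDnn : 0 ≤ D := Metric.diam_nonneg
  have hbound := hScomp.isBounded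
  have hdist : ∀ a ∈ S, ∀ b ∈ S, ‖a - b‖ ≤ D := by
    intro a ha b hb
    rw [← dist_eq_norm]
    exact Metric.dist_le_diam_of_mem hbound ha hb
  have hBdd : BddAbove ((fun x => ‖gradient f x‖) '' S) := by
    refine ⟨‖gradient f (x 0)‖ + |L| * D, ?_⟩
    rintro a ⟨z, hz, rfl⟩
    have h1 : ‖gradient f z - gradient f (x 0)‖ ≤ L * ‖z - x 0‖ := hLip z hz _ hx0
    have h2 : L * ‖z - x 0‖ ≤ |L| * D := by
      have := hdist z hz _ hx0
      calc L * ‖z - x 0‖ ≤ |L| * ‖z - x 0‖ :=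
            mul_le_mul_of_nonneg_right (le_abs_self L) (norm_nonneg _)
        _ ≤ |L| * D := mul_le_mul_of_nonneg_left this (abs_nonneg L)
    have := norm_sub_norm_le (gradient f z) (gradient f (x 0))
    simp only; linarith
  have hGb : ∀ z ∈ S, ‖gradient f z‖ ≤ Gn := by
    intro z hz
    exact le_csSup hBdd ⟨z, hz, rfl⟩
  have hGnn : 0 ≤ Gn := le_trans (norm_nonneg _) (hGb _ hx0)
  have hCnn : 0 ≤ C := le_trans (mul_nonneg hGnn hDnn) (le_trans (le_max_right _ _) hC)
  -- flip lemma for inner products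
  have flip : ∀ (a b c : EuclideanSpace ℝ (Fin d)), ⟪a, b - c⟫ = -⟪a, c - b⟫ := by
    intro a b c
    rw [show b - c = -(c - b) by abel, inner_neg_right]
  -- oracle consequences
  have hor1 : ∀ k, ∀ t ∈ S, ⟪gradient f (x k), x k - t⟫ ≤ ⟪g k, x k - t⟫ + δ := by
    intro k t ht
    have h := abs_le.1 (horacle k t ht)
    have e := inner_sub_left (𝕜 := ℝ) (gradient f (x k)) (g k) (t - x k)
    have e1 := flip (gradient f (x k)) (x k) t
    have e2 := flip (g k) (x k) t
    rw [e] at h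
    linarith [h.1, h.2]
  have hor2 : ∀ k, ∀ t ∈ S, ⟪g k, x k - t⟫ ≤ ⟪gradient f (x k), x k - t⟫ + δ := by
    intro k t ht
    have h := abs_le.1 (horacle k t ht)
    have e := inner_sub_left (𝕜 := ℝ) (gradient f (x k)) (g k) (t - x k)
    have e1 := flip (gradient f (x k)) (x k) t
    have e2 := flip (g k) (x k) t
    rw [e] at h
    linarith [h.1, h.2]
  -- h k - δ ≤ C whenever x k ∈ S
  have hhC : ∀ k, x k ∈ S → ⟪g k, x k - s k⟫ - δ ≤ C := by
    intro k hk
    have h1 := hor2 k (s k) (hsS k)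
    have h2 : ⟪gradient f (x k), x k - s k⟫ ≤ ‖gradient f (x k)‖ * ‖x k - s k‖ :=
      real_inner_le_norm _ _
    have h3 : ‖gradient f (x k)‖ * ‖x k - s k‖ ≤ Gn * D :=
      mul_le_mul (hGb _ hk) (hdist _ hk _ (hsS k)) (norm_nonneg _) hGnn
    have h4 : Gn * D ≤ C := le_trans (le_max_right _ _) hC
    linarith
  -- all iterates stay in S
  have hxS : ∀ k, x k ∈ S := by
    intro k
    induction k with
    | zero => exact hx0
    | succ n ih =>
      set γ := max (⟪g n, x n - s n⟫ - δ) 0 / C with hγdef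
      have hmnn : (0:ℝ) ≤ max (⟪g n, x n - s n⟫ - δ) 0 := le_max_right _ _
      have hmC : max (⟪g n, x n - s n⟫ - δ) 0 ≤ C := max_le (hhC n ih) hCnn
      have hγ0 : 0 ≤ γ := div_nonneg hmnn hCnn
      have hγ1 : γ ≤ 1 := by
        rcases eq_or_lt_of_le hCnn with hc | hc
        · simp [hγdef, ← hc]
        · exact (div_le_one hc).2 hmC
      rw [hupd n]
      have := hSconv ih (hsS n) (by linarith : 0 ≤ 1 - γ) hγ0 (by ring)
      convert this using 1
      module
  -- continuity and bddBelow of f on S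
  have hcont : ContinuousOn f S := fun z hz => (hdiff z hz).continuousAt.continuousWithinAt
  have hfBdd : BddBelow (f '' S) := (hScomp.image_of_continuousOn hcont).bddBelow
  -- L * ‖a - b‖² ≤ C for a b ∈ S
  have hLC : ∀ a ∈ S, ∀ b ∈ S, L * ‖a - b‖ ^ 2 ≤ C := by
    intro a ha b hb
    rcases le_or_gt 0 L with hL | hL
    · have h1 : ‖a - b‖ ^ 2 ≤ D ^ 2 := by
        have := hdist a ha b hb
        nlinarith [norm_nonneg (a - b)]
      calc L * ‖a - b‖ ^ 2 ≤ L * D ^ 2 := mul_le_mul_of_nonneg_left h1 hL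
        _ ≤ C := le_trans (le_max_left _ _) hC
    · have hab : a = b := by
        by_contra hne
        have h0 : 0 < ‖a - b‖ := by
          rw [norm_pos_iff]
          exact sub_ne_zero_of_ne hne
        have := hLip a ha b hb
        nlinarith [norm_nonneg (gradient f a - gradient f b)]
      simp [hab, hCnn]
  -- main argument by contradiction
  by_contra hcon
  push_neg at hcon
  obtain ⟨E, hE⟩ : ∃ E : ℝ, E = ε - 2 * δ := ⟨_, rfl⟩
  have hEpos : 0 < E := by rw [hE]; linarith
  -- for each k ≤ K, the oracle gap is large
  have hgap : ∀ k ≤ K, E < ⟪g k, x k - s k⟫ - δ := by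
    intro k hk
    have hsup := hcon k hk
    have hub : sSup ((fun t => ⟪gradient f (x k), x k - t⟫) '' S) ≤
        ⟪g k, x k - s k⟫ + δ := by
      apply csSup_le (hSne.image _)
      rintro a ⟨t, ht, rfl⟩
      have h1 := hor1 k t ht
      have h2 : ⟪g k, x k - t⟫ ≤ ⟪g k, x k - s k⟫ := by
        have := hmin k t ht
        have e1 := flip (g k) (x k) t
        have e2 := flip (g k) (x k) (s k)
        linarith
      simp only; linarith
    rw [hE]; linarith
  have hC0 : 0 < C := lt_of_lt_of_le (lt_trans hEpos (hgap 0 (Nat.zero_le K))) (hhC 0 hx0)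
  -- per-step descent
  have hstep : ∀ k ≤ K, f (x (k + 1)) < f (x k) - E ^ 2 / (2 * C) := by
    intro k hk
    obtain ⟨mk, hmk⟩ : ∃ mk : ℝ, mk = ⟪g k, x k - s k⟫ - δ := ⟨_, rfl⟩
    have hmkE : E < mk := by rw [hmk]; exact hgap k hk
    have hmkpos : 0 < mk := lt_trans hEpos hmkE
    have hmax : max (⟪g k, x k - s k⟫ - δ) 0 = mk := by
      rw [hmk]; exact max_eq_left (by rw [hmk] at hmkpos; linarith)
    obtain ⟨γ, hγdef⟩ : ∃ γ : ℝ, γ = mk / C := ⟨_, rfl⟩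
    have hγ0 : 0 ≤ γ := by rw [hγdef]; exact div_nonneg (le_of_lt hmkpos) (le_of_lt hC0)
    have hdiffv : x (k + 1) - x k = γ • (s k - x k) := by
      rw [hupd k, hmax, ← hγdef]; abel
    have hquad := fw_quad_bound hSconv f L hdiff hLip (hxS k) (hxS (k + 1))
    rw [hdiffv] at hquad
    have hin : ⟪gradient f (x k), γ • (s k - x k)⟫ = γ * ⟪gradient f (x k), s k - x k⟫ :=
      real_inner_smul_right _ _ _
    have hnorm : ‖γ • (s k - x k)‖ ^ 2 = γ ^ 2 * ‖s k - x k‖ ^ 2 := by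
      rw [norm_smul, mul_pow, Real.norm_eq_abs, sq_abs]
    rw [hin, hnorm] at hquad
    -- bound the inner product term
    have hA : ⟪gradient f (x k), s k - x k⟫ ≤ -mk := by
      have h1 := hor2 k (s k) (hsS k)
      have e1 := flip (gradient f (x k)) (s k) (x k)
      rw [hmk]
      linarith
    have hB : L * ‖s k - x k‖ ^ 2 ≤ C := hLC _ (hsS k) _ (hxS k)
    have key : f (x (k + 1)) ≤ f (x k) - γ * mk + C / 2 * γ ^ 2 := by
      have t1 : γ * ⟪gradient f (x k), s k - x k⟫ ≤ γ * (-mk) :=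
        mul_le_mul_of_nonneg_left hA hγ0
      rw [mul_neg] at t1
      have t2 : L / 2 * (γ ^ 2 * ‖s k - x k‖ ^ 2) ≤ C / 2 * γ ^ 2 := by
        nlinarith [sq_nonneg γ]
      linarith
    have heq : f (x k) - γ * mk + C / 2 * γ ^ 2 = f (x k) - mk ^ 2 / (2 * C) := by
      rw [hγdef]; field_simp; ring
    rw [heq] at key
    have hlt : E ^ 2 / (2 * C) < mk ^ 2 / (2 * C) := by
      have h2 : E ^ 2 < mk ^ 2 := by nlinarith
      exact (div_lt_div_iff_of_pos_right (by positivity : (0:ℝ) < 2 * C)).2 h2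
    linarith
  -- telescoping
  have hsum : ∀ j, j ≤ K → f (x j) ≤ f (x 0) - j * (E ^ 2 / (2 * C)) := by
    intro j
    induction j with
    | zero => intro _; simp
    | succ n ih =>
      intro hn
      have h1 := hstep n (le_of_lt (Nat.lt_of_succ_le hn))
      have h2 := ih (le_of_lt (Nat.lt_of_succ_le hn))
      push_cast
      linarith
  have hfinal : f (x (K + 1)) < f (x 0) - (K + 1) * (E ^ 2 / (2 * C)) := by
    have h1 := hstep K le_rfl
    have h2 := hsum K le_rfl
    push_cast
    linarith
  have hinf : sInf (f '' S) ≤ f (x (K + 1)) := csInf_le hfBdd ⟨x (K + 1), hxS (K + 1), rfl⟩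
  -- contradiction with hK
  have hK' : 2 * C * (f (x 0) - sInf (f '' S)) ≤ ((K : ℝ) + 1) * E ^ 2 := by
    have hE2 : (0:ℝ) < E ^ 2 := by positivity
    rw [← hE, ge_iff_le, div_le_iff₀ hE2] at hK
    exact hK
  have hlt2 : ((K : ℝ) + 1) * (E ^ 2 / (2 * C)) < f (x 0) - sInf (f '' S) := by
    linarith
  have hlt3 : ((K : ℝ) + 1) * E ^ 2 < 2 * C * (f (x 0) - sInf (f '' S)) := by
    have h3 := mul_lt_mul_of_pos_left hlt2 (by positivity : (0:ℝ) < 2 * C)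
    calc ((K : ℝ) + 1) * E ^ 2 = 2 * C * (((K : ℝ) + 1) * (E ^ 2 / (2 * C))) := by
          field_simp
      _ < 2 * C * (f (x 0) - sInf (f '' S)) := h3
  linarith
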